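/- Let G = (V, E_1, …, E_k) be a multilayer graph and let E_i^N ⊆ (V choose 2)∖E_i and S_i ⊆ E_i (i ∈ [k]) be a feasible solution of MinMultiLayerSTC+Variant with d_k(S_1,…,S_k) = 0, i.e., each S_i fulfills the STC for E_i ∪ E_i^N, condition (3) holds, and there is no disagreement. Then C = { n_e : e ∈ (E_i∖S_i) ∪ E_i^N for some i ∈ [k] } is a vertex cover of the combined wedge hypergraph W of G. -/

import Mathlib

open Finset

/-- A wedge `(v, {u, w})` of an edge set `E`. -/
def IsWedge {V : Type*} (E : Finset (Sym2 V)) (v u w : V) : Prop :=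
  u ≠ v ∧ v ≠ w ∧ u ≠ w ∧ s(u, v) ∈ E ∧ s(v, w) ∈ E ∧ s(u, w) ∉ E

/-- A labeling `S ⊆ E` fulfills the strong triadic closure for `E`. -/
def FulfillsSTC {V : Type*} (E S : Finset (Sym2 V)) : Prop :=
  ∀ u v w : V, u ≠ v → v ≠ w → u ≠ w → s(u, v) ∈ S → s(v, w) ∈ S → s(u, w) ∈ E

/-- `s(e)`: the number of layers in which `e` is labeled strong. -/
def sCount {V : Type*} [DecidableEq V] {k : ℕ} (Ss : Fin k → Finset (Sym2 V))
    (e : Sym2 V) : ℕ :=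
  (Finset.univ.filter fun i => e ∈ Ss i).card

/-- `w(e)`: the number of layers in which `e` is labeled weak. -/
def wCount {V : Type*} [DecidableEq V] {k : ℕ} (Es Ss : Fin k → Finset (Sym2 V))
    (e : Sym2 V) : ℕ :=
  (Finset.univ.filter fun i => e ∈ Es i ∧ e ∉ Ss i).card

/-- `d_k(S_1, …, S_k) = ∑_{e ∈ E, w(e) > 0} s(e)`: the number of disagreements. -/
def disagree {V : Type*} [DecidableEq V] {k : ℕ} (Es Ss : Fin k → Finset (Sym2 V)) : ℕ :=
  ∑ e ∈ (Finset.univ.biUnion Es).filter (fun e => 0 < wCount Es Ss e), sCount Ss e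

/-- `(V choose 2)`: the set of all 2-element subsets of `V`, as elements of `Sym2 V`. -/
def allPairs (V : Type*) [Fintype V] [DecidableEq V] : Finset (Sym2 V) :=
  Finset.univ.filter fun e => ¬ e.IsDiag

instance {V : Type*} [DecidableEq V] (E : Finset (Sym2 V)) (v u w : V) :
    Decidable (IsWedge E v u w) := by
  unfold IsWedge; infer_instance

/-- `N_i`: the candidate new edges of layer `i`, i.e. the non-edges `e` of layer `i`
such that `(v, e)` is a wedge of `E_i` for some `v`. -/
def candNew {V : Type*} [Fintype V] [DecidableEq V] {k : ℕ}
    (Es : Fin k → Finset (Sym2 V)) (i : Fin k) : Finset (Sym2 V) :=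
  (allPairs V \ Es i).filter fun e => ∃ v u w, IsWedge (Es i) v u w ∧ e = s(u, w)

/-- `C` (a set of vertices `n_e`, identified with the corresponding edges `e`) is a
vertex cover of the combined wedge hypergraph `W`: for every layer `i` and every wedge
`(v, {u, w}) ∈ 𝒲(E_i)`, `W` has the hyperedge `{n_{uv}, n_{vw}, n_{uw}}`, and a vertex
cover intersects every hyperedge. -/
def IsCombinedHypergraphVC {V : Type*} {k : ℕ} (Es : Fin k → Finset (Sym2 V))
    (C : Finset (Sym2 V)) : Prop :=
  ∀ i : Fin k, ∀ v u w : V, IsWedge (Es i) v u w →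
    s(u, v) ∈ C ∨ s(v, w) ∈ C ∨ s(u, w) ∈ C

/-- The weight `w(n_e) = |{i : e ∈ E_i}| + |{i : e ∈ N_i}|` of the vertex `n_e` of the
combined wedge hypergraph. -/
def hyperWeight {V : Type*} [Fintype V] [DecidableEq V] {k : ℕ}
    (Es : Fin k → Finset (Sym2 V)) (e : Sym2 V) : ℕ :=
  (Finset.univ.filter fun i => e ∈ Es i).card +
    (Finset.univ.filter fun i => e ∈ candNew Es i).card

/-- Condition (3) of MinMultiLayerSTC+Variant. -/
def Cond3 {V : Type*} {k : ℕ} (Es ENs : Fin k → Finset (Sym2 V)) : Prop :=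
  ∀ i j : Fin k, ∀ u w : V,
    s(u, w) ∈ ENs i → (∃ v, IsWedge (Es j) v u w) → s(u, w) ∈ ENs j

/-- From a feasible solution of MinMultiLayerSTC+Variant without disagreements, the set
`C = {n_e : e ∈ (E_i ∖ S_i) ∪ E_i^N for some i}` (restricted to the vertices of `W`) is
a vertex cover of the combined wedge hypergraph `W`. -/
theorem stc_plus_variant_gives_hypergraph_vc {V : Type*} [Fintype V] [DecidableEq V]
    {k : ℕ} (Es ENs Ss : Fin k → Finset (Sym2 V))
    (hEN : ∀ i, ENs i ⊆ allPairs V \ Es i)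
    (hS : ∀ i, Ss i ⊆ Es i)
    (hstc : ∀ i, FulfillsSTC (Es i ∪ ENs i) (Ss i))
    (h3 : Cond3 Es ENs)
    (hd : disagree (fun i => Es i ∪ ENs i) Ss = 0) :
    IsCombinedHypergraphVC Es
      ((Finset.univ.biUnion (fun i => Es i ∪ candNew Es i)).filter
        fun e => ∃ i, e ∈ (Es i \ Ss i) ∪ ENs i) := by
  intro i v u w hw
  obtain ⟨huv, hvw, huw, h1, h2, h3'⟩ := hw
  by_cases hs1 : s(u, v) ∈ Ss i
  · by_cases hs2 : s(v, w) ∈ Ss i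
    · right; right
      have hin : s(u, w) ∈ Es i ∪ ENs i := hstc i u v w huv hvw huw hs1 hs2
      have hEN' : s(u, w) ∈ ENs i := by
        rcases Finset.mem_union.1 hin with h | h
        · exact absurd h h3'
        · exact h
      refine Finset.mem_filter.2 ⟨Finset.mem_biUnion.2 ⟨i, Finset.mem_univ i, ?_⟩, ⟨i, Finset.mem_union.2 (Or.inr hEN')⟩⟩
      refine Finset.mem_union.2 (Or.inr ?_)
      refine Finset.mem_filter.2 ⟨hEN i hEN', ⟨v, u, w, ⟨huv, hvw, huw, h1, h2, h3'⟩, rfl⟩⟩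
    · right; left
      exact Finset.mem_filter.2 ⟨Finset.mem_biUnion.2 ⟨i, Finset.mem_univ i, Finset.mem_union.2 (Or.inl h2)⟩,
        ⟨i, Finset.mem_union.2 (Or.inl (Finset.mem_sdiff.2 ⟨h2, hs2⟩))⟩⟩
  · left
    exact Finset.mem_filter.2 ⟨Finset.mem_biUnion.2 ⟨i, Finset.mem_univ i, Finset.mem_union.2 (Or.inl h1)⟩,
      ⟨i, Finset.mem_union.2 (Or.inl (Finset.mem_sdiff.2 ⟨h1, hs1⟩))⟩⟩
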